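/- Let d ≥ 2 be an integer and β > 0. Then the inequality d·Q̂_{SOS,β}(k) > Q̂_{SOS,β}(0) holds for all k ∈ [0, π] if and only if cosh β > (d+1)/(d−1), i.e. if and only if β > arcosh((d+1)/(d−1)), where Q̂_{SOS,β}(k) = ∑_{n∈ℤ} exp(−β|n|)·cos(n·k). -/

import Mathlib

/-- Fourier transform of the SOS transfer operator at inverse temperature `β`. -/
noncomputable def sosFourier (β k : ℝ) : ℝ :=
  ∑' n : ℤ, Real.exp (-β * |(n : ℝ)|) * Real.cos (n * k)

/-- The inverse hyperbolic cosine `arcosh x = log (x + √(x² − 1))` (for `x ≥ 1`). -/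
noncomputable def arcosh (x : ℝ) : ℝ := Real.log (x + Real.sqrt (x ^ 2 - 1))

open Real in
lemma sosFourier_eq (β : ℝ) (hβ : 0 < β) (k : ℝ) :
    sosFourier β k = (1 - Real.exp (-β) ^ 2) /
      (1 - 2 * Real.exp (-β) * Real.cos k + Real.exp (-β) ^ 2) := by
  set r : ℝ := Real.exp (-β) with hr
  have hr0 : 0 < r := Real.exp_pos _
  have hr1 : r < 1 := Real.exp_lt_one_iff.mpr (by linarith)
  set z : ℂ := (r : ℂ) * Complex.exp (k * Complex.I) with hz
  have hnz : ‖z‖ < 1 := by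
    rw [hz, norm_mul, Complex.norm_exp_ofReal_mul_I]
    simp [Complex.norm_real, abs_of_pos hr0, hr1]
  have hgeom : HasSum (fun n : ℕ => z ^ n) (1 - z)⁻¹ :=
    hasSum_geometric_of_norm_lt_one hnz
  have hre : HasSum (fun n : ℕ => (z ^ n).re) ((1 - z)⁻¹).re :=
    Complex.hasSum_re hgeom
  set S : ℝ := ((1 - z)⁻¹).re with hS
  set g : ℕ → ℝ := fun n => r ^ n * Real.cos (n * k) with hg
  have hzn : ∀ n : ℕ, (z ^ n).re = g n := by
    intro n
    rw [hz, mul_pow, ← Complex.ofReal_pow, ← Complex.exp_nat_mul]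
    rw [show (n : ℂ) * ((k : ℂ) * Complex.I) = ((n * k : ℝ) : ℂ) * Complex.I by
      push_cast; ring]
    rw [Complex.re_ofReal_mul, Complex.exp_ofReal_mul_I_re]
  have hgS : HasSum g S := by
    have := hre; simp only [hzn] at this; exact this
  have hg0 : g 0 = 1 := by simp [hg]
  have hgshift : HasSum (fun n : ℕ => g (n + 1)) (S - 1) := by
    have h2 : HasSum g (S - 1 + ∑ i ∈ Finset.range 1, g i) := by
      simpa [hg0] using hgS
    exact (hasSum_nat_add_iff 1).mpr h2
  set f : ℤ → ℝ := fun n => Real.exp (-β * |(n : ℝ)|) * Real.cos (n * k) with hf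
  have hfn : ∀ n : ℕ, f (n : ℤ) = g n := by
    intro n
    simp only [hf, hg, Int.cast_natCast]
    rw [abs_of_nonneg (by positivity : (0:ℝ) ≤ ((n : ℕ) : ℝ)),
      mul_comm (-β) ((n : ℕ) : ℝ), Real.exp_nat_mul]
  have hfneg : ∀ n : ℕ, f (-((n : ℤ) + 1)) = g (n + 1) := by
    intro n
    simp only [hf, hg]
    rw [show ((-((n : ℤ) + 1) : ℤ) : ℝ) = -(((n + 1 : ℕ) : ℝ)) by push_cast; ring]
    rw [abs_neg, abs_of_nonneg (by positivity : (0:ℝ) ≤ ((n + 1 : ℕ) : ℝ)),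
      show (-(((n + 1 : ℕ) : ℝ))) * k = -(((n + 1 : ℕ) : ℝ) * k) by ring, Real.cos_neg,
      show -β * (((n + 1 : ℕ)) : ℝ) = (((n + 1 : ℕ)) : ℝ) * -β by ring, Real.exp_nat_mul]
  have hsum : HasSum f (S + (S - 1)) := by
    apply HasSum.of_nat_of_neg_add_one
    · simpa only [hfn] using hgS
    · simpa only [hfneg] using hgshift
  have hSval : S = (1 - r * Real.cos k) / (1 - 2 * r * Real.cos k + r ^ 2) := by
    rw [hS, Complex.inv_re]
    have h1 : (1 - z).re = 1 - r * Real.cos k := by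
      simp [hz, Complex.re_ofReal_mul, Complex.exp_ofReal_mul_I_re]
    have h2 : (1 - z).im = -(r * Real.sin k) := by
      simp [hz, Complex.im_ofReal_mul, Complex.exp_ofReal_mul_I_im]
    have hsc : Real.sin k ^ 2 + Real.cos k ^ 2 = 1 := Real.sin_sq_add_cos_sq k
    have hns : (1 - r * Real.cos k) * (1 - r * Real.cos k) +
        -(r * Real.sin k) * -(r * Real.sin k) = 1 - 2 * r * Real.cos k + r ^ 2 := by
      nlinarith [hsc]
    rw [Complex.normSq_apply, h1, h2, hns]
  have hD : 0 < 1 - 2 * r * Real.cos k + r ^ 2 := by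
    nlinarith [mul_pos (sub_pos.mpr hr1) (sub_pos.mpr hr1),
      mul_nonneg hr0.le (sub_nonneg.mpr (Real.cos_le_one k))]
  have := hsum.tsum_eq
  rw [sosFourier]
  rw [show (∑' n : ℤ, Real.exp (-β * |(n : ℝ)|) * Real.cos (n * k)) = S + (S - 1) from this]
  rw [hSval]
  rw [div_sub_one hD.ne', ← add_div]; congr 1; ring

theorem stmt17 (d : ℕ) (hd : 2 ≤ d) (β : ℝ) (hβ : 0 < β) :
    ((∀ k ∈ Set.Icc (0 : ℝ) Real.pi, (d : ℝ) * sosFourier β k > sosFourier β 0) ↔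
      Real.cosh β > ((d : ℝ) + 1) / ((d : ℝ) - 1)) ∧
    ((∀ k ∈ Set.Icc (0 : ℝ) Real.pi, (d : ℝ) * sosFourier β k > sosFourier β 0) ↔
      β > arcosh (((d : ℝ) + 1) / ((d : ℝ) - 1))) := by
  set r : ℝ := Real.exp (-β) with hr
  have hr0 : 0 < r := Real.exp_pos _
  have hr1 : r < 1 := Real.exp_lt_one_iff.mpr (by linarith)
  have hd2 : (2 : ℝ) ≤ (d : ℝ) := by exact_mod_cast hd
  have hd1 : (0 : ℝ) < (d : ℝ) - 1 := by linarith
  have h1r2 : (0 : ℝ) < 1 - r ^ 2 := by nlinarith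
  have hQ0 : sosFourier β 0 = (1 - r ^ 2) / (1 - 2 * r + r ^ 2) := by
    rw [sosFourier_eq β hβ 0, Real.cos_zero, ← hr]; ring_nf
  have hD0 : (0 : ℝ) < 1 - 2 * r + r ^ 2 := by
    nlinarith [mul_pos (sub_pos.mpr hr1) (sub_pos.mpr hr1)]
  -- key polynomial criterion
  have key : (∀ k ∈ Set.Icc (0 : ℝ) Real.pi, (d : ℝ) * sosFourier β k > sosFourier β 0) ↔
      ((d : ℝ) - 1) * (1 + r ^ 2) > 2 * r * ((d : ℝ) + 1) := by
    constructor
    · intro h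
      have hπ := h Real.pi ⟨Real.pi_pos.le, le_refl _⟩
      rw [sosFourier_eq β hβ Real.pi, Real.cos_pi, hQ0, ← hr] at hπ
      have hDπ : (0 : ℝ) < 1 - 2 * r * (-1) + r ^ 2 := by nlinarith [sq_nonneg (1 + r)]
      rw [gt_iff_lt, ← mul_div_assoc, div_lt_div_iff₀ hD0 hDπ] at hπ
      have hπ' : (1 - r ^ 2) * ((1 + r) ^ 2) < (1 - r ^ 2) * ((d : ℝ) * (1 - r) ^ 2) := by
        linarith [hπ]
      have hπ'' : (1 + r) ^ 2 < (d : ℝ) * (1 - r) ^ 2 := (mul_lt_mul_iff_of_pos_left h1r2).mp hπ'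
      nlinarith [hπ'']
    · intro hkey k _
      rw [sosFourier_eq β hβ k, hQ0, ← hr]
      have hcos : -1 ≤ Real.cos k := Real.neg_one_le_cos k
      have hDk : (0 : ℝ) < 1 - 2 * r * Real.cos k + r ^ 2 := by
        nlinarith [mul_pos (sub_pos.mpr hr1) (sub_pos.mpr hr1),
          mul_nonneg hr0.le (sub_nonneg.mpr (Real.cos_le_one k))]
      rw [gt_iff_lt, ← mul_div_assoc, div_lt_div_iff₀ hD0 hDk]
      have hDle : 1 - 2 * r * Real.cos k + r ^ 2 ≤ 1 + 2 * r + r ^ 2 := by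
        nlinarith [mul_nonneg hr0.le (by linarith : (0:ℝ) ≤ 1 + Real.cos k)]
      have hgap : 1 - 2 * r * Real.cos k + r ^ 2 < (d : ℝ) * (1 - 2 * r + r ^ 2) := by
        linarith [hkey, hDle]
      linarith [mul_lt_mul_of_pos_left hgap h1r2]
  have hE : (0 : ℝ) < Real.exp β := Real.exp_pos β
  have hcosh : Real.cosh β = (1 + r ^ 2) / (2 * r) := by
    rw [Real.cosh_eq, hr, Real.exp_neg]
    field_simp
  have iff1 : (∀ k ∈ Set.Icc (0 : ℝ) Real.pi, (d : ℝ) * sosFourier β k > sosFourier β 0) ↔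
      Real.cosh β > ((d : ℝ) + 1) / ((d : ℝ) - 1) := by
    rw [key, hcosh, gt_iff_lt, gt_iff_lt, div_lt_div_iff₀ hd1 (by linarith : (0:ℝ) < 2 * r)]
    constructor <;> intro h <;> linarith [h]
  refine ⟨iff1, iff1.trans ?_⟩
  set c : ℝ := ((d : ℝ) + 1) / ((d : ℝ) - 1) with hc
  have hc1 : 1 < c := by
    rw [hc, lt_div_iff₀ hd1]; linarith
  have hs2 : Real.sqrt (c ^ 2 - 1) ^ 2 = c ^ 2 - 1 :=
    Real.sq_sqrt (by nlinarith)
  have hsnn : 0 ≤ Real.sqrt (c ^ 2 - 1) := Real.sqrt_nonneg _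
  set u : ℝ := c + Real.sqrt (c ^ 2 - 1) with hu
  have hu1 : 1 ≤ u := by rw [hu]; linarith
  have hu0 : 0 < u := by linarith
  have hinv : u⁻¹ = c - Real.sqrt (c ^ 2 - 1) := by
    apply inv_eq_of_mul_eq_one_right
    rw [hu]; linear_combination -hs2
  have hcosh_arcosh : Real.cosh (arcosh c) = c := by
    rw [arcosh, ← hu, Real.cosh_eq, Real.exp_log hu0, Real.exp_neg, Real.exp_log hu0,
      hinv, hu]
    ring
  have harc_nn : 0 ≤ arcosh c := by
    rw [arcosh, ← hu]; exact Real.log_nonneg hu1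
  constructor
  · intro h
    rw [gt_iff_lt, ← abs_of_pos hβ, ← abs_of_nonneg harc_nn, ← Real.cosh_lt_cosh,
      hcosh_arcosh]
    exact h
  · intro h
    have h2 : Real.cosh (arcosh c) < Real.cosh β := by
      rw [Real.cosh_lt_cosh, abs_of_nonneg harc_nn, abs_of_pos hβ]
      exact h
    rw [hcosh_arcosh] at h2
    exact h2
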